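/- Let G be a {C4, C5}-free graph and C a clique in G. For every pair of adjacent vertices x and y outside C, the neighborhoods of x and y within C are comparable by inclusion: N(x) ∩ C ⊆ N(y) ∩ C or N(y) ∩ C ⊆ N(x) ∩ C. -/

import Mathlib

open scoped Classical

/-- Graph on `Fin n` with the given edge list. -/
def graphOfList (n : ℕ) (l : List (ℕ × ℕ)) : SimpleGraph (Fin n) :=
  SimpleGraph.fromRel (fun a b => ((a : ℕ), (b : ℕ)) ∈ l)

/-- `G` contains no induced subgraph isomorphic to `H`. -/
def Free {α : Type*} {V : Type*} (H : SimpleGraph α) (G : SimpleGraph V) : Prop :=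
  IsEmpty (H ↪g G)

def twoP3 : SimpleGraph (Fin 6) := graphOfList 6 [(0,1),(1,2),(3,4),(4,5)]
def p3PlusK3 : SimpleGraph (Fin 6) := graphOfList 6 [(0,1),(1,2),(3,4),(4,5),(3,5)]
def twoK3 : SimpleGraph (Fin 6) := graphOfList 6 [(0,1),(1,2),(0,2),(3,4),(4,5),(3,5)]
def cycle4 : SimpleGraph (Fin 4) := graphOfList 4 [(0,1),(1,2),(2,3),(3,0)]
def cycle5 : SimpleGraph (Fin 5) := graphOfList 5 [(0,1),(1,2),(2,3),(3,4),(4,0)]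
def cycle6 : SimpleGraph (Fin 6) := graphOfList 6 [(0,1),(1,2),(2,3),(3,4),(4,5),(5,0)]

/-- `G` is `{2P3, P3+K3, 2K3, C4, C5, C6}`-free. -/
def FFree {V : Type*} (G : SimpleGraph V) : Prop :=
  Free twoP3 G ∧ Free p3PlusK3 G ∧ Free twoK3 G ∧ Free cycle4 G ∧ Free cycle5 G ∧ Free cycle6 G

/-- `v1 v2 v3 v4` form an induced `2K2` with edges `v1v2` and `v3v4`. -/
def Induced2K2 {V : Type*} (G : SimpleGraph V) (v1 v2 v3 v4 : V) : Prop :=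
  v1 ≠ v2 ∧ v1 ≠ v3 ∧ v1 ≠ v4 ∧ v2 ≠ v3 ∧ v2 ≠ v4 ∧ v3 ≠ v4 ∧
  G.Adj v1 v2 ∧ G.Adj v3 v4 ∧ ¬ G.Adj v1 v3 ∧ ¬ G.Adj v1 v4 ∧ ¬ G.Adj v2 v3 ∧ ¬ G.Adj v2 v4
theorem clique_neighborhoods_comparable {V : Type*} (G : SimpleGraph V)
    (h4 : Free cycle4 G) (h5 : Free cycle5 G) (C : Set V) (hC : G.IsClique C)
    (x y : V) (hx : x ∉ C) (hy : y ∉ C) (hxy : G.Adj x y) :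
    (G.neighborSet x ∩ C ⊆ G.neighborSet y ∩ C) ∨
      (G.neighborSet y ∩ C ⊆ G.neighborSet x ∩ C) := by
  by_contra hcon
  push_neg at hcon
  rw [Set.not_subset, Set.not_subset] at hcon
  obtain ⟨⟨a, ha, hay⟩, b, hb, hbx⟩ := hcon
  obtain ⟨hax, haC⟩ := ha
  obtain ⟨hby, hbC⟩ := hb
  have hya : ¬ G.Adj y a := fun h => hay ⟨h, haC⟩
  have hxb : ¬ G.Adj x b := fun h => hbx ⟨h, hbC⟩
  have hab' : a ≠ b := fun h => hbx (h ▸ ⟨hax, haC⟩)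
  have hab : G.Adj a b := hC haC hbC hab'
  have hxa : x ≠ a := fun h => hx (h ▸ haC)
  have hxC : x ≠ b := fun h => hx (h ▸ hbC)
  have hya' : y ≠ a := fun h => hy (h ▸ haC)
  have hyb : y ≠ b := fun h => hy (h ▸ hbC)
  have hxy' : x ≠ y := hxy.ne
  have hadj1 : G.Adj x a := hax
  have hadj2 : G.Adj b y := (hby : G.Adj y b).symm
  have hxb' : ¬ G.Adj b x := fun h => hxb h.symm
  have hya'' : ¬ G.Adj a y := fun h => hya h.symm
  exact h4.false ⟨⟨![x, a, b, y], by
    intro i j hij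
    fin_cases i <;> fin_cases j <;>
      simp_all [Matrix.cons_val_zero, Matrix.cons_val_one, eq_comm]⟩, by
    intro i j
    fin_cases i <;> fin_cases j <;>
      simp_all [cycle4, graphOfList, SimpleGraph.fromRel, G.adj_comm a x,
        G.adj_comm y x, G.adj_comm b a, G.adj_comm y b, G.ne_of_adj] <;>
      first
        | decide
        | exact G.irrefl
        | exact hxb
        | exact hya
        | exact hxb'
        | exact hya''
        | exact hadj1
        | exact hadj1.symm
        | exact hab
        | exact hab.symm
        | exact hadj2
        | exact hadj2.symm
        | exact hxy
        | exact hxy.symm⟩
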